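/- Let E be a locally solid vector lattice. If (T_α) and (S_α) are nets of linear operators on E (over the same directed index set) both converging to 0 order-uniformly on a neighborhood U of 0, then the net of compositions (T_α ∘ S_α) converges to 0 order-uniformly on U; that is, for every a ∈ E with 0 ≤ a there is an index α₀ such that |T_α (S_α x)| ≤ a for all x ∈ U and all α ≥ α₀. -/

import Mathlib

open Filter Topology Pointwise

/-- In a locally solid vector lattice `E`, if the nets `(T α)` and `(S α)` of linear
operators both converge to `0` order-uniformly on a neighborhood `U` of `0`, then the net of
compositions `(T α ∘ S α)` converges to `0` order-uniformly on `U`. -/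
theorem comp_orderUnifConv
    {E : Type*} [AddCommGroup E] [Lattice E] [Module ℝ E]
    [CovariantClass E E (· + ·) (· ≤ ·)] [PosSMulMono ℝ E]
    [TopologicalSpace E] [IsTopologicalAddGroup E] [ContinuousSMul ℝ E]
    (hsolid : ∀ W ∈ 𝓝 (0 : E), ∃ W' ∈ 𝓝 (0 : E), W' ⊆ W ∧
      ∀ x y : E, y ∈ W' → |x| ≤ |y| → x ∈ W')
    {ι : Type*} [Nonempty ι] [SemilatticeSup ι]
    (T S : ι → E →ₗ[ℝ] E) (U : Set E) (hU : U ∈ 𝓝 (0 : E))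
    (hT : ∀ a : E, 0 ≤ a → ∃ α₀ : ι, ∀ α ≥ α₀, ∀ x ∈ U, |T α x| ≤ a)
    (hS : ∀ a : E, 0 ≤ a → ∃ α₀ : ι, ∀ α ≥ α₀, ∀ x ∈ U, |S α x| ≤ a) :
    ∀ a : E, 0 ≤ a → ∃ α₀ : ι, ∀ α ≥ α₀, ∀ x ∈ U, |T α (S α x)| ≤ a := by
  intro a ha
  obtain ⟨W', hW', hW'U, hW'solid⟩ := hsolid U hU
  -- find c > 0 with c • a ∈ W'
  have hcont : Filter.Tendsto (fun c : ℝ => c • a) (𝓝 0) (𝓝 (0 : E)) := by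
    have := (continuous_id.smul continuous_const : Continuous fun c : ℝ => c • a)
    have h0 : Filter.Tendsto (fun c : ℝ => c • a) (𝓝 0) (𝓝 ((0:ℝ) • a)) := this.tendsto 0
    rwa [zero_smul] at h0
  obtain ⟨c, hc0, hcW⟩ : ∃ c : ℝ, 0 ≤ c ∧ c • a ∈ W' := by
    have h := (hcont.mono_left nhdsWithin_le_nhds :
      Filter.Tendsto (fun c : ℝ => c • a) (𝓝[>] 0) (𝓝 (0 : E))).eventually_mem (by simpa using hW' : W' ∈ 𝓝 (0:E))
    rcases (h.and self_mem_nhdsWithin).exists with ⟨c, h1, h2⟩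
    exact ⟨c, le_of_lt h2, h1⟩
  have hca : 0 ≤ c • a := smul_nonneg hc0 ha
  obtain ⟨α₁, hα₁⟩ := hS (c • a) hca
  obtain ⟨α₂, hα₂⟩ := hT a ha
  refine ⟨α₁ ⊔ α₂, fun α hα x hx => ?_⟩
  have h1 : |S α x| ≤ c • a := hα₁ α (le_trans le_sup_left hα) x hx
  have h2 : S α x ∈ U := hW'U (hW'solid _ _ hcW (by rwa [abs_of_nonneg hca]))
  exact hα₂ α (le_trans le_sup_right hα) _ h2
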